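/- Let G be a finite group. Then G is purely non-abelian if and only if the following holds: for every group homomorphism p: Ẑ(G) → Z(G), defining the group homomorphism T_p: Hom(G, Ĝ) → Hom(G, Z(G)) by T_p(β)(x) = p(ρ(β(x))), choosing any complete set β₁, …, β_m of coset representatives of ker(T_p) in the abelian group Hom(G, Ĝ), and defining endomorphisms δ_k of G by δ_k(x) = x·p(ρ(β_k(x))) for 1 ≤ k ≤ m, one has Hom(G, Ĝ) = ⋃_{k=1}^{m} { β ∘ δ_k : β ∈ β_k · ker(T_p) }, where β ∘ δ_k denotes the bicharacter x ↦ β(δ_k(x)). -/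

import Mathlib

/-- A finite group `G` is purely non-abelian if it has no nontrivial abelian direct
factor: whenever `G` is the internal direct product of two normal subgroups `A` and `B`
with `A` abelian, `A` is trivial. -/
def PurelyNonAbelian (G : Type*) [Group G] : Prop :=
  ∀ A B : Subgroup G, A.Normal → B.Normal → IsCompl A B →
    (∀ a b : A, a * b = b * a) → A = ⊥

section AuxiliaryLemmas

/-- In a finite monoid, some positive power of every element is idempotent. -/
lemma exists_idem_pow {M : Type*} [Monoid M] [Finite M] (a : M) :
    ∃ n, 1 ≤ n ∧ a ^ (2 * n) = a ^ n := by
  obtain ⟨i, j, hne, hij⟩ := Finite.exists_ne_map_eq_of_infinite (fun n : ℕ => a ^ n)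
  wlog h : i < j generalizing i j
  · exact this j i hne.symm hij.symm (by omega)
  set d := j - i with hd
  have hd1 : 1 ≤ d := by omega
  have key : ∀ k, i ≤ k → a ^ (k + d) = a ^ k := by
    intro k hk
    have h1 : k + d = (k - i) + j := by omega
    have h2 : k = (k - i) + i := by omega
    rw [h1, pow_add, ← hij, ← pow_add, ← h2]
  have key2 : ∀ t k, i ≤ k → a ^ (k + t * d) = a ^ k := by
    intro t
    induction t with
    | zero => simp
    | succ t ih =>
        intro k hk
        have h3 : k + (t + 1) * d = (k + t * d) + d := by ring
        rw [h3, key _ (by omega), ih k hk]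
  refine ⟨d * (i + 1), by nlinarith, ?_⟩
  have h4 : 2 * (d * (i + 1)) = d * (i + 1) + (i + 1) * d := by ring
  rw [h4, key2 (i + 1) (d * (i + 1)) (by nlinarith)]

variable {G : Type*} [Group G]

/-- The endomorphism `x ↦ x · h(x)` associated to a homomorphism `h : G → Z(G)`. -/
def deltaHom (h : G →* Subgroup.center G) : G →* G where
  toFun x := x * ↑(h x)
  map_one' := by simp
  map_mul' x y := by
    have hc : y * ↑(h x) = ↑(h x) * y :=
      (Subgroup.mem_center_iff.mp (h x).2 y)
    simp only [map_mul, Subgroup.coe_mul]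
    calc x * y * (↑(h x) * ↑(h y)) = x * (y * ↑(h x)) * ↑(h y) := by group
    _ = x * (↑(h x) * y) * ↑(h y) := by rw [hc]
    _ = x * ↑(h x) * (y * ↑(h y)) := by group

@[simp] lemma deltaHom_apply (h : G →* Subgroup.center G) (x : G) :
    deltaHom h x = x * ↑(h x) := rfl

open IsMulCommutative in
/-- Adney–Yen: if `G` is purely non-abelian then `x ↦ x·h(x)` has trivial kernel. -/
lemma pna_ker_triv [Finite G] (hG : PurelyNonAbelian G)
    (h : G →* Subgroup.center G) : ∀ x : G, x * ↑(h x) = 1 → x = 1 := by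
  classical
  intro x₀ hx₀
  by_contra hne
  have hx₀inv : ((h x₀ : G))⁻¹ = x₀ := inv_eq_of_mul_eq_one_left hx₀
  have hx₀c : x₀ ∈ Subgroup.center G := by
    rw [← hx₀inv]
    exact (Subgroup.center G).inv_mem (h x₀).2
  haveI : Finite (↥(Subgroup.center G) →* ↥(Subgroup.center G)) :=
    Finite.of_injective (fun f => (f : ↥(Subgroup.center G) → ↥(Subgroup.center G)))
      DFunLike.coe_injective
  haveI : Finite (Monoid.End ↥(Subgroup.center G)) :=
    inferInstanceAs (Finite (↥(Subgroup.center G) →* ↥(Subgroup.center G)))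
  let T : Monoid.End ↥(Subgroup.center G) :=
    (invMonoidHom : _ →* _).comp (h.comp (Subgroup.center G).subtype)
  obtain ⟨M, hM1, hM⟩ := exists_idem_pow T
  have hMfun : ∀ w, (⇑T)^[2 * M] w = (⇑T)^[M] w := by
    intro w
    have := congrArg (fun (f : Monoid.End ↥(Subgroup.center G)) => (f : _ → _) w) hM
    simpa [Monoid.End.coe_pow] using this
  have hMM : ∀ w, (⇑T)^[M] ((⇑T)^[M] w) = (⇑T)^[M] w := by
    intro w
    have := hMfun w
    rwa [two_mul, Function.iterate_add_apply] at this
  let u : G →* ↥(Subgroup.center G) := (invMonoidHom : _ →* _).comp h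
  let π' : G →* ↥(Subgroup.center G) :=
    ((T ^ (2 * M - 1) : Monoid.End _) : _ →* _).comp u
  let π : G →* G := (Subgroup.center G).subtype.comp π'
  have hπ : ∀ x : G, π x = ↑((⇑T)^[2 * M - 1] ((h x)⁻¹)) := fun x => rfl
  let ψ : ↥(Subgroup.center G) →* G :=
    (Subgroup.center G).subtype.comp ((T ^ M : Monoid.End _) : _ →* _)
  let A : Subgroup G := ψ.range
  have hψ : ∀ z, ψ z = ↑((⇑T)^[M] z) := fun z => rfl
  have hπcoe : ∀ z : ↥(Subgroup.center G), π ↑z = ↑((⇑T)^[2 * M] z) := by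
    intro z
    rw [hπ]
    congr 1
    have h1 : (h (↑z : G))⁻¹ = T z := rfl
    rw [h1, ← Function.iterate_succ_apply]
    congr 1
    omega
  have hπA : ∀ a ∈ A, π a = a := by
    rintro a ⟨z, rfl⟩
    rw [hψ, hπcoe, hMfun, hMM]
  have hπran : ∀ x : G, π x ∈ A := by
    intro x
    refine ⟨(⇑T)^[M - 1] (u x), ?_⟩
    rw [hψ, ← Function.iterate_add_apply]
    have hadd : M + (M - 1) = 2 * M - 1 := by omega
    rw [hadd, hπ x]
    rfl
  have hx₀A : x₀ ∈ A := by
    refine ⟨⟨x₀, hx₀c⟩, ?_⟩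
    have hfix : T ⟨x₀, hx₀c⟩ = ⟨x₀, hx₀c⟩ := by
      apply Subtype.ext
      show ((h x₀ : G))⁻¹ = x₀
      exact hx₀inv
    rw [hψ, Function.iterate_fixed hfix]
  have hAle : ∀ a ∈ A, a ∈ Subgroup.center G := by
    rintro a ⟨z, rfl⟩
    rw [hψ]
    exact ((⇑T)^[M] z).2
  have hAnormal : A.Normal := by
    constructor
    intro a ha g
    have hcomm := Subgroup.mem_center_iff.mp (hAle a ha) g
    rw [hcomm, mul_assoc, mul_inv_cancel, mul_one]
    exact ha
  let B : Subgroup G := π.ker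
  have hBnormal : B.Normal := MonoidHom.normal_ker π
  have hdisj : Disjoint A B := by
    rw [Subgroup.disjoint_def]
    intro x hxA hxB
    have h1 := hπA x hxA
    have h2 : π x = 1 := hxB
    rw [h2] at h1; exact h1.symm
  have hcodisj : Codisjoint A B := by
    rw [codisjoint_iff, eq_top_iff]
    intro g _
    have hg : g = π g * ((π g)⁻¹ * g) := by group
    rw [hg]
    refine Subgroup.mul_mem _ (Subgroup.mem_sup_left (hπran g)) (Subgroup.mem_sup_right ?_)
    show (π g)⁻¹ * g ∈ π.ker
    rw [MonoidHom.mem_ker, map_mul, map_inv, hπA (π g) (hπran g), inv_mul_cancel]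
  have hAcomm : ∀ a b : ↥A, a * b = b * a := by
    intro a b
    apply Subtype.ext
    show (↑a : G) * ↑b = ↑b * ↑a
    exact (Subgroup.mem_center_iff.mp (hAle ↑a a.2) ↑b).symm
  have hbot := hG A B hAnormal hBnormal ⟨hdisj, hcodisj⟩ hAcomm
  rw [hbot] at hx₀A
  exact hne (Subgroup.mem_bot.mp hx₀A)

lemma deltaHom_bijective [Finite G] (hG : PurelyNonAbelian G)
    (h : G →* Subgroup.center G) : Function.Bijective (deltaHom h) := by
  have hinj : Function.Injective (deltaHom h) :=
    (injective_iff_map_eq_one (deltaHom h)).mpr (fun a ha => pna_ker_triv hG h a ha)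
  exact Finite.injective_iff_bijective.mp hinj

open IsMulCommutative in
/-- injectivity of `f ↦ f · (f ∘ f)` -/
lemma phi_inj [Finite G] (hG : PurelyNonAbelian G)
    (f g : G →* Subgroup.center G)
    (H : ∀ x, f x * f ↑(f x) = g x * g ↑(g x)) : ∀ x, f x = g x := by
  classical
  have hdg : Function.Bijective (deltaHom g) := deltaHom_bijective hG g
  let φ : Monoid.End ↥(Subgroup.center G) :=
    (invMonoidHom : _ →* _).comp (f.comp (Subgroup.center G).subtype)
  have hφ : ∀ z, φ z = (f ↑z)⁻¹ := fun z => rfl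
  let k : G →* Subgroup.center G := f * g⁻¹
  have hk : ∀ x, k x = f x * (g x)⁻¹ := fun x => rfl
  have hstar : ∀ x, k (deltaHom g x) = φ (k x) := by
    intro x
    have e1 : k (deltaHom g x) = (f x * f ↑(g x)) * (g x * g ↑(g x))⁻¹ := by
      rw [hk, deltaHom_apply, map_mul, map_mul]
    rw [e1, ← H x, hφ, hk]
    have e2 : (f (↑(f x * (g x)⁻¹) : G))⁻¹ = (f ↑(f x) * (f ↑(g x))⁻¹)⁻¹ := by
      push_cast
      rw [map_mul, map_inv]
    have key : ∀ a b c : ↥(Subgroup.center G), (a * b) * (a * c)⁻¹ = (c * b⁻¹)⁻¹ := by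
      intro a b c
      rw [mul_inv_rev c b⁻¹, inv_inv, mul_inv_rev a c, mul_comm a b, mul_assoc,
        mul_comm c⁻¹ a⁻¹, mul_inv_cancel_left]
    rw [e2]
    exact key _ _ _
  haveI : Finite (Monoid.End ↥(Subgroup.center G)) :=
    Finite.of_injective
      (fun f : Monoid.End ↥(Subgroup.center G) => (f : ↥(Subgroup.center G) → ↥(Subgroup.center G)))
      DFunLike.coe_injective
  obtain ⟨M, hM1, hM⟩ := exists_idem_pow φ
  have hMfun : ∀ w, (⇑φ)^[2 * M] w = (⇑φ)^[M] w := by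
    intro w
    have := congrArg (fun (f : Monoid.End ↥(Subgroup.center G)) => (f : _ → _) w) hM
    simpa [Monoid.End.coe_pow] using this
  have hiter : ∀ n x, (⇑φ)^[n] (k x) = k ((deltaHom g)^[n] x) := by
    intro n
    induction n with
    | zero => intro x; rfl
    | succ n ih =>
        intro x
        rw [Function.iterate_succ_apply, Function.iterate_succ_apply, ← hstar x,
          ih (deltaHom g x)]
  have hfixS : ∀ x, (⇑φ)^[M] (k x) = k x := by
    intro x
    obtain ⟨y, rfl⟩ := (Function.Bijective.iterate hdg M).surjective x
    rw [← hiter M y, ← Function.iterate_add_apply, ← two_mul, hMfun]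
  -- the homomorphism h' with h' = id on range k
  let h' : G →* Subgroup.center G :=
    ((φ ^ (M - 1) : Monoid.End _) : _ →* _).comp ((invMonoidHom : _ →* _).comp f)
  have hh' : ∀ w : G, h' w = (⇑φ)^[M - 1] ((f w)⁻¹) := fun w => rfl
  have hid : ∀ x, h' ↑(k x) = k x := by
    intro x
    rw [hh']
    have e1 : (f (↑(k x) : G))⁻¹ = φ (k x) := rfl
    rw [e1, ← Function.iterate_succ_apply]
    have hM' : M - 1 + 1 = M := by omega
    simpa [Nat.succ_eq_add_one, hM'] using hfixS x
  let h2 : G →* Subgroup.center G := h'⁻¹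
  have hk1 : ∀ x, k x = 1 := by
    intro x
    have := pna_ker_triv hG h2 ↑(k x) ?_
    · have h3 : ((k x : G)) = ((1 : Subgroup.center G) : G) := by rw [this]; rfl
      exact Subtype.ext (by simpa using this)
    · show (↑(k x) : G) * ↑((h' ↑(k x))⁻¹) = 1
      rw [hid]
      push_cast
      simp
  intro x
  have := hk1 x
  rw [hk] at this
  exact mul_inv_eq_one.mp this

/-- bundled `x ↦ p ((c x)|_{Z(G)})` -/
def valHom (p : (↥(Subgroup.center G) →* ℂˣ) →* ↥(Subgroup.center G))
    (c : G →* (G →* ℂˣ)) : G →* ↥(Subgroup.center G) where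
  toFun x := p ((c x).comp (Subgroup.center G).subtype)
  map_one' := by
    show p ((c 1).comp (Subgroup.center G).subtype) = 1
    rw [map_one]
    have : ((1 : G →* ℂˣ)).comp (Subgroup.center G).subtype = 1 := MonoidHom.one_comp _
    rw [this, map_one]
  map_mul' x y := by
    show p ((c (x * y)).comp (Subgroup.center G).subtype) = _
    rw [map_mul]
    have : ((c x * c y)).comp (Subgroup.center G).subtype
        = (c x).comp (Subgroup.center G).subtype * (c y).comp (Subgroup.center G).subtype :=
      MonoidHom.mul_comp _ _ _
    rw [this, map_mul]

@[simp] lemma valHom_apply (p : (↥(Subgroup.center G) →* ℂˣ) →* ↥(Subgroup.center G))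
    (c : G →* (G →* ℂˣ)) (x : G) :
    valHom p c x = p ((c x).comp (Subgroup.center G).subtype) := rfl

theorem forward_dir [Finite G] (hG : PurelyNonAbelian G)
    (p : (Subgroup.center G →* ℂˣ) →* Subgroup.center G)
    (m : ℕ) (β : Fin m → (G →* (G →* ℂˣ)))
    (hyp : ∀ b : G →* (G →* ℂˣ), ∃! k : Fin m, ∀ x : G,
        p ((β k x).comp (Subgroup.center G).subtype)
          = p ((b x).comp (Subgroup.center G).subtype)) :
    ∀ c : G →* (G →* ℂˣ), ∃ k : Fin m, ∃ b : G →* (G →* ℂˣ),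
      (∀ x : G, p ((b x).comp (Subgroup.center G).subtype)
          = p ((β k x).comp (Subgroup.center G).subtype)) ∧
      ∀ x : G, c x = b (x * (p ((β k x).comp (Subgroup.center G).subtype) : G)) := by
  classical
  intro c
  set F : Fin m → (G →* ↥(Subgroup.center G)) := fun k => valHom p (β k) with hF
  have hFval : ∀ k x, F k x = p ((β k x).comp (Subgroup.center G).subtype) := fun k x => rfl
  set d : Fin m → (G →* G) := fun k => deltaHom (F k) with hd
  have hdbij : ∀ k, Function.Bijective (d k) := fun k => deltaHom_bijective hG (F k)
  -- σ
  have hσex : ∀ k : Fin m, ∃ j : Fin m, ∀ x, F j x = F k x * F k ↑(F k x) := by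
    intro k
    obtain ⟨j, hj, -⟩ := hyp ((β k).comp (d k))
    refine ⟨j, fun x => ?_⟩
    have h1 := hj x
    rw [hFval]
    rw [h1]
    show p ((β k (d k x)).comp _) = _
    rw [← hFval k (d k x)]
    have h2 : d k x = x * ↑(F k x) := rfl
    rw [h2, map_mul]
  choose σ hσ using hσex
  have hσinj : Function.Injective σ := by
    intro k k' hkk'
    have heq : ∀ x, F k x * F k ↑(F k x) = F k' x * F k' ↑(F k' x) := by
      intro x
      rw [← hσ k x, ← hσ k' x, hkk']
    have hFeq : ∀ x, F k x = F k' x := phi_inj hG (F k) (F k') heq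
    obtain ⟨j₀, -, huniq⟩ := hyp (β k)
    have e1 : k = j₀ := huniq k (fun x => rfl)
    have e2 : k' = j₀ := huniq k' (fun x => (hFeq x).symm)
    rw [e1, e2]
  have hσsurj : Function.Surjective σ := Finite.injective_iff_surjective.mp hσinj
  obtain ⟨k₀, hk₀, -⟩ := hyp c
  obtain ⟨k, hk⟩ := hσsurj k₀
  -- G2
  have hG2 : ∀ x, p ((c x).comp (Subgroup.center G).subtype) = F k (d k x) := by
    intro x
    rw [← hk₀ x, ← hFval k₀ x, ← hk, hσ k x]
    have h2 : d k x = x * ↑(F k x) := rfl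
    rw [h2, map_mul]
  let E : G ≃* G := MulEquiv.ofBijective (d k) (hdbij k)
  have hE : ∀ x, E x = d k x := fun x => rfl
  refine ⟨k, c.comp E.symm.toMonoidHom, ?_, ?_⟩
  · intro x
    show p ((c (E.symm x)).comp _) = _
    rw [hG2 (E.symm x)]
    have h3 : d k (E.symm x) = x := by
      rw [← hE, E.apply_symm_apply]
    rw [h3, hFval]
  · intro x
    show c x = c (E.symm (x * ↑(p ((β k x).comp (Subgroup.center G).subtype))))
    have h4 : x * (↑(p ((β k x).comp (Subgroup.center G).subtype)) : G) = E x := rfl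
    rw [h4, E.symm_apply_apply]

/-- Construction: a non-trivial abelian direct factor yields `p` and a bicharacter `c`
with `f := p∘ρ∘c` nontrivial but `f(x)·f(f(x)) = 1`. -/
lemma construction [Finite G] (A B : Subgroup G) (nA : A.Normal) (nB : B.Normal)
    (hcompl : IsCompl A B) (hAcomm : ∀ a b : ↥A, a * b = b * a) (hAne : A ≠ ⊥) :
    ∃ (p : (↥(Subgroup.center G) →* ℂˣ) →* ↥(Subgroup.center G)) (c : G →* (G →* ℂˣ)),
      (∃ x : G, p ((c x).comp (Subgroup.center G).subtype) ≠ 1) ∧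
      (∀ x : G, p ((c x).comp (Subgroup.center G).subtype)
        * p ((c (↑(p ((c x).comp (Subgroup.center G).subtype)) : G)).comp
            (Subgroup.center G).subtype) = 1) := by
  classical
  obtain ⟨a₀s, ha₀s⟩ := Subgroup.ne_bot_iff_exists_ne_one.mp hAne
  -- elements of A and B commute
  have hAB : ∀ a ∈ A, ∀ b ∈ B, a * b = b * a := by
    intro a ha b hb
    have h1 : a * b * a⁻¹ * b⁻¹ ∈ A := by
      have h1' : a * (b * a⁻¹ * b⁻¹) ∈ A := A.mul_mem ha (nA.conj_mem a⁻¹ (A.inv_mem ha) b)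
      have : a * (b * a⁻¹ * b⁻¹) = a * b * a⁻¹ * b⁻¹ := by group
      rwa [this] at h1'
    have h2 : a * b * a⁻¹ * b⁻¹ ∈ B := B.mul_mem (nB.conj_mem b hb a) (B.inv_mem hb)
    have h3 : a * b * a⁻¹ * b⁻¹ = 1 := Subgroup.disjoint_def.mp hcompl.disjoint h1 h2
    have h4 : a * b * a⁻¹ = b := mul_inv_eq_one.mp h3
    calc a * b = (a * b * a⁻¹) * a := by group
    _ = b * a := by rw [h4]
  -- every element decomposes
  have hdecomp : ∀ g : G, ∃ a ∈ A, ∃ b ∈ B, a * b = g := by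
    intro g
    have htop : A ⊔ B = ⊤ := codisjoint_iff.mp hcompl.codisjoint
    have hg : g ∈ (↑(A ⊔ B) : Set G) := by rw [htop]; trivial
    rw [Subgroup.mul_normal A B] at hg
    exact hg
  -- A is central
  have hAcent : ∀ a ∈ A, a ∈ Subgroup.center G := by
    intro a ha
    rw [Subgroup.mem_center_iff]
    intro g
    obtain ⟨x, hx, y, hy, rfl⟩ := hdecomp g
    have hxa : x * a = a * x := congrArg Subtype.val (hAcomm ⟨x, hx⟩ ⟨a, ha⟩)
    have hya : a * y = y * a := hAB a ha y hy
    calc x * y * a = x * (y * a) := by rw [mul_assoc]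
    _ = x * (a * y) := by rw [← hya]
    _ = (x * a) * y := by rw [mul_assoc]
    _ = (a * x) * y := by rw [hxa]
    _ = a * (x * y) := by rw [mul_assoc]
  -- projection onto A
  have hcommF : ∀ (a : ↥A) (b : ↥B), Commute (A.subtype a) (B.subtype b) :=
    fun a b => hAB ↑a a.2 ↑b b.2
  let φAB : ↥A × ↥B →* G := A.subtype.noncommCoprod B.subtype hcommF
  have hφAB : ∀ q : ↥A × ↥B, φAB q = ↑q.1 * ↑q.2 := fun q => rfl
  have hbij : Function.Bijective φAB := by
    constructor
    · rw [injective_iff_map_eq_one]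
      intro q hq
      rw [hφAB] at hq
      have h1 : (↑q.1 : G) = (↑q.2 : G)⁻¹ := eq_inv_of_mul_eq_one_left hq
      have hmemB : (↑q.1 : G) ∈ B := by rw [h1]; exact B.inv_mem q.2.2
      have hq1 : (↑q.1 : G) = 1 := Subgroup.disjoint_def.mp hcompl.disjoint q.1.2 hmemB
      have hq2 : (↑q.2 : G) = 1 := by
        have := hq
        rw [hq1, one_mul] at this
        exact this
      have : q = (1, 1) := Prod.ext (Subtype.ext hq1) (Subtype.ext hq2)
      rw [this]; rfl
    · intro g
      obtain ⟨a, ha, b, hb, hab⟩ := hdecomp g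
      exact ⟨(⟨a, ha⟩, ⟨b, hb⟩), hab⟩
  let EAB : (↥A × ↥B) ≃* G := MulEquiv.ofBijective φAB hbij
  let πA : G →* ↥A := (MonoidHom.fst ↥A ↥B).comp EAB.symm.toMonoidHom
  have hπA : ∀ a : ↥A, πA ↑a = a := by
    intro a
    have h1 : EAB (a, 1) = ↑a := by
      show φAB (a, 1) = ↑a
      rw [hφAB]; simp
    show (EAB.symm ↑a).1 = a
    rw [← h1, EAB.symm_apply_apply]
  -- structure theory of A
  haveI instCommA : IsMulCommutative A := ⟨⟨hAcomm⟩⟩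
  open IsMulCommutative in
  obtain ⟨ι, hι, n, hn, ⟨EA⟩⟩ := CommGroup.equiv_prod_multiplicative_zmod_of_finite ↥A
  have hEA1 : EA a₀s ≠ 1 := by
    intro h
    exact ha₀s (EA.injective (by rw [h, map_one]))
  obtain ⟨i₀, hi₀⟩ : ∃ i, EA a₀s i ≠ 1 := by
    by_contra h
    push_neg at h
    exact hEA1 (funext h)
  have hN : 1 < n i₀ := hn i₀
  haveI : NeZero (n i₀) := ⟨by omega⟩
  haveI : Fact (1 < n i₀) := ⟨hN⟩
  set N := n i₀ with hNdef
  let wA : ↥A := EA.symm (Pi.mulSingle i₀ (Multiplicative.ofAdd (1 : ZMod N)))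
  have hwc : (↑wA : G) ∈ Subgroup.center G := hAcent ↑wA wA.2
  set w : G := ↑wA with hwdef
  have hw1 : w ≠ 1 := by
    intro h
    have hwA1 : wA = 1 := Subtype.ext h
    have h2 : (Pi.mulSingle i₀ (Multiplicative.ofAdd (1 : ZMod N))
        : (i : ι) → Multiplicative (ZMod (n i))) = 1 := by
      rw [← EA.apply_symm_apply (Pi.mulSingle i₀ (Multiplicative.ofAdd (1 : ZMod N)))]
      show EA wA = 1
      rw [hwA1, map_one]
    have h3 := congrFun h2 i₀
    rw [Pi.mulSingle_eq_same] at h3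
    have h4 : (1 : ZMod N) = 0 := congrArg Multiplicative.toAdd h3
    exact one_ne_zero h4
  have hwAN : wA ^ N = 1 := by
    apply EA.injective
    rw [map_pow, map_one, EA.apply_symm_apply]
    funext j
    rw [Pi.pow_apply, Pi.one_apply]
    by_cases hj : j = i₀
    · subst hj
      rw [Pi.mulSingle_eq_same]
      show Multiplicative.ofAdd (1 : ZMod N) ^ N = 1
      have : Multiplicative.ofAdd (1 : ZMod N) ^ N
          = Multiplicative.ofAdd ((N : ℕ) • (1 : ZMod N)) := by
        rw [ofAdd_nsmul]
      rw [this, nsmul_eq_mul, mul_one, ZMod.natCast_self]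
      rfl
    · rw [Pi.mulSingle_eq_of_ne hj, one_pow]
  have hwN : w ^ N = 1 := by
    rw [hwdef, ← SubmonoidClass.coe_pow, hwAN]
    rfl
  -- the character μ : G → Multiplicative (ZMod N)
  let μ : G →* Multiplicative (ZMod N) :=
    (invMonoidHom : Multiplicative (ZMod N) →* Multiplicative (ZMod N)).comp
      ((Pi.evalMonoidHom (fun i : ι => Multiplicative (ZMod (n i))) i₀).comp
        (EA.toMonoidHom.comp πA))
  have hμ : ∀ x : G, μ x = (EA (πA x) i₀)⁻¹ := fun x => rfl
  have hμw : μ w = Multiplicative.ofAdd (-1 : ZMod N) := by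
    rw [hμ, hwdef, hπA wA]
    show (EA (EA.symm (Pi.mulSingle i₀ (Multiplicative.ofAdd (1 : ZMod N)))) i₀)⁻¹ = _
    rw [EA.apply_symm_apply, Pi.mulSingle_eq_same]
    exact (ofAdd_neg (1 : ZMod N)).symm
  -- primitive N-th root of unity
  have hNne : (N : ℕ) ≠ 0 := by omega
  have hζ : IsPrimitiveRoot (Complex.exp (2 * Real.pi * Complex.I / N)) N :=
    Complex.isPrimitiveRoot_exp N hNne
  let ζ : ℂˣ := Units.mk0 (Complex.exp (2 * Real.pi * Complex.I / N)) (Complex.exp_ne_zero _)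
  have hζval : (ζ : ℂ) = Complex.exp (2 * Real.pi * Complex.I / N) := rfl
  have hζN : ζ ^ N = 1 := by
    apply Units.ext
    rw [Units.val_pow_eq_pow_val, hζval, hζ.pow_eq_one]
    rfl
  -- the pairing e : Multiplicative (ZMod N) →* ℂˣ
  have hzN : (zmultiplesHom (Additive ℂˣ) (Additive.ofMul ζ)) (N : ℤ) = 0 := by
    show (N : ℤ) • Additive.ofMul ζ = 0
    rw [← ofMul_zpow, zpow_natCast, hζN]
    rfl
  let eAdd : ZMod N →+ Additive ℂˣ :=
    ZMod.lift N ⟨zmultiplesHom (Additive ℂˣ) (Additive.ofMul ζ), hzN⟩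
  let e : Multiplicative (ZMod N) →* ℂˣ := AddMonoidHom.toMultiplicativeLeft eAdd
  have he_int : ∀ x : ℤ, e (Multiplicative.ofAdd ((x : ZMod N))) = ζ ^ x := by
    intro x
    show Additive.toMul (eAdd ((x : ZMod N))) = ζ ^ x
    rw [ZMod.lift_coe]
    show Additive.toMul ((x : ℤ) • Additive.ofMul ζ) = ζ ^ x
    rw [← ofMul_zpow]
    rfl
  have heN : ∀ j : Multiplicative (ZMod N), (e j) ^ N = 1 := by
    intro j
    obtain ⟨x, hx⟩ := ZMod.intCast_surjective j.toAdd
    have hj : j = Multiplicative.ofAdd ((x : ZMod N)) := by rw [hx]; rfl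
    rw [hj, he_int, ← zpow_natCast, ← zpow_mul, mul_comm, zpow_mul, zpow_natCast, hζN, one_zpow]
  have hEU : ∀ ξ : ℂˣ, ξ ^ N = 1 → ∃! j : Multiplicative (ZMod N), e j = ξ := by
    intro ξ hξ
    have hξC : (ξ : ℂ) ^ N = 1 := by
      rw [← Units.val_pow_eq_pow_val, hξ]
      rfl
    obtain ⟨i, hiN, hi⟩ := hζ.eq_pow_of_pow_eq_one hξC
    refine ⟨Multiplicative.ofAdd ((i : ℕ) : ZMod N), ?_, ?_⟩
    · show e (Multiplicative.ofAdd ((i : ℕ) : ZMod N)) = ξ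
      have hcast : ((i : ℕ) : ZMod N) = (((i : ℕ) : ℤ) : ZMod N) := by push_cast; rfl
      rw [hcast, he_int]
      apply Units.ext
      rw [Units.val_zpow_eq_zpow_val, hζval, zpow_natCast, hi]
    · intro j hj
      have h1 : ((j.toAdd.val : ℕ) : ZMod N) = j.toAdd := ZMod.natCast_rightInverse j.toAdd
      have h2 : e (Multiplicative.ofAdd (((j.toAdd.val : ℕ) : ZMod N))) = ξ := by
        rw [h1, ofAdd_toAdd]
        exact hj
      have h3 : e (Multiplicative.ofAdd (((j.toAdd.val : ℕ) : ZMod N)))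
          = ζ ^ ((j.toAdd.val : ℕ) : ℤ) := by
        rw [show (((j.toAdd.val : ℕ)) : ZMod N) = (((j.toAdd.val : ℕ) : ℤ) : ZMod N) by
          push_cast; rfl]
        exact he_int _
      have h4 : Complex.exp (2 * Real.pi * Complex.I / N) ^ (j.toAdd.val) = (ξ : ℂ) := by
        have h5 := congrArg Units.val (h3.symm.trans h2)
        rwa [Units.val_zpow_eq_zpow_val, hζval, zpow_natCast] at h5
      have h6 : j.toAdd.val = i := hζ.pow_inj (ZMod.val_lt j.toAdd) hiN (h4.trans hi.symm)
      rw [← ofAdd_toAdd j, ← h1, h6]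
  -- discrete logarithm
  let dl0 : ℂˣ → ZMod N := fun ξ =>
    if h : ξ ^ N = 1 then ((hEU ξ h).choose).toAdd else 0
  have hdl0_spec : ∀ ξ (h : ξ ^ N = 1), e (Multiplicative.ofAdd (dl0 ξ)) = ξ := by
    intro ξ h
    show e (Multiplicative.ofAdd (dite _ _ _)) = ξ
    rw [dif_pos h, ofAdd_toAdd]
    exact (hEU ξ h).choose_spec.1
  have hdl0_eq : ∀ ξ (h : ξ ^ N = 1) (j : Multiplicative (ZMod N)),
      e j = ξ → j.toAdd = dl0 ξ := by
    intro ξ h j hj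
    show j.toAdd = dite _ _ _
    rw [dif_pos h]
    exact congrArg Multiplicative.toAdd ((hEU ξ h).choose_spec.2 j hj)
  -- ω : Multiplicative (ZMod N) →* Z(G)
  let wc : ↥(Subgroup.center G) := ⟨w, hwc⟩
  have hwcN : wc ^ N = 1 := by
    apply Subtype.ext
    rw [SubmonoidClass.coe_pow]
    exact hwN
  have hzNw : (zmultiplesHom (Additive ↥(Subgroup.center G)) (Additive.ofMul wc)) (N : ℤ) = 0 := by
    show (N : ℤ) • Additive.ofMul wc = 0
    rw [← ofMul_zpow, zpow_natCast, hwcN]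
    rfl
  let ωAdd : ZMod N →+ Additive ↥(Subgroup.center G) :=
    ZMod.lift N ⟨zmultiplesHom (Additive ↥(Subgroup.center G)) (Additive.ofMul wc), hzNw⟩
  let ω : Multiplicative (ZMod N) →* ↥(Subgroup.center G) := AddMonoidHom.toMultiplicativeLeft ωAdd
  have hω_int : ∀ x : ℤ, ω (Multiplicative.ofAdd ((x : ZMod N))) = wc ^ x := by
    intro x
    show Additive.toMul (ωAdd ((x : ZMod N))) = wc ^ x
    rw [ZMod.lift_coe]
    show Additive.toMul ((x : ℤ) • Additive.ofMul wc) = wc ^ x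
    rw [← ofMul_zpow]
    rfl
  -- p
  have hχwN : ∀ χ : ↥(Subgroup.center G) →* ℂˣ, (χ wc) ^ N = 1 := by
    intro χ
    rw [← map_pow, hwcN, map_one]
  let p : (↥(Subgroup.center G) →* ℂˣ) →* ↥(Subgroup.center G) :=
    { toFun := fun χ => (ω (Multiplicative.ofAdd (dl0 (χ wc))))⁻¹
      map_one' := by
        have h0 : (0 : ZMod N) = dl0 ((1 : ↥(Subgroup.center G) →* ℂˣ) wc) := by
          refine hdl0_eq _ (hχwN 1) (Multiplicative.ofAdd (0 : ZMod N)) ?_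
          show e 1 = _
          rw [map_one]
          rfl
        
        show (ω (Multiplicative.ofAdd (dl0 ((1 : ↥(Subgroup.center G) →* ℂˣ) wc))))⁻¹ = 1
        rw [← h0]
        show (ω 1)⁻¹ = 1
        rw [map_one, inv_one]
      map_mul' := fun χ χ' => by
        show (ω (Multiplicative.ofAdd (dl0 ((χ * χ') wc))))⁻¹ = _
        have hsum : dl0 (χ wc) + dl0 (χ' wc) = dl0 ((χ * χ') wc) := by
          refine hdl0_eq _ (hχwN (χ * χ')) (Multiplicative.ofAdd (dl0 (χ wc) + dl0 (χ' wc))) ?_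
          rw [ofAdd_add, map_mul, hdl0_spec _ (hχwN χ), hdl0_spec _ (hχwN χ')]
          rfl
        rw [← hsum, ofAdd_add, map_mul, mul_inv] }
  have hp : ∀ χ : ↥(Subgroup.center G) →* ℂˣ,
      p χ = (ω (Multiplicative.ofAdd (dl0 (χ wc))))⁻¹ := fun χ => rfl
  -- the bicharacter c
  let c : G →* (G →* ℂˣ) :=
    { toFun := fun x => e.comp
        ((AddMonoidHom.toMultiplicative (AddMonoidHom.mulLeft ((μ x).toAdd))).comp μ)
      map_one' := MonoidHom.ext fun y => by
        show e (Multiplicative.ofAdd ((μ 1).toAdd * (μ y).toAdd)) = 1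
        rw [map_one μ]
        show e (Multiplicative.ofAdd ((0 : ZMod N) * (μ y).toAdd)) = 1
        rw [zero_mul]
        show e 1 = 1
        rw [map_one]
      map_mul' := fun x x' => MonoidHom.ext fun y => by
        show e (Multiplicative.ofAdd ((μ (x * x')).toAdd * (μ y).toAdd)) = _
        rw [map_mul μ]
        show e (Multiplicative.ofAdd (((μ x).toAdd + (μ x').toAdd) * (μ y).toAdd)) = _
        rw [add_mul, ofAdd_add, map_mul]
        rfl }
  have hcxy : ∀ x y : G, c x y = e (Multiplicative.ofAdd ((μ x).toAdd * (μ y).toAdd)) :=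
    fun x y => rfl
  -- value computation
  have hμwAdd : (μ w).toAdd = (-1 : ZMod N) := by rw [hμw]; rfl
  have hval : ∀ x : G, p ((c x).comp (Subgroup.center G).subtype)
      = ω (Multiplicative.ofAdd ((μ x).toAdd)) := by
    intro x
    rw [hp]
    have h1 : ((c x).comp (Subgroup.center G).subtype) wc = c x w := rfl
    have h2 : c x w = e (Multiplicative.ofAdd (-(μ x).toAdd)) := by
      rw [hcxy, hμwAdd, mul_neg_one]
    have h3 : dl0 (((c x).comp (Subgroup.center G).subtype) wc) = -(μ x).toAdd := by
      rw [h1]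
      refine (hdl0_eq (c x w) ?_ (Multiplicative.ofAdd (-(μ x).toAdd)) h2.symm).symm
      rw [h2]
      exact heN _
    rw [h3, ofAdd_neg, map_inv, inv_inv]
  -- μ of ω-values
  have hμω : ∀ j : Multiplicative (ZMod N), (μ ↑(ω j)).toAdd = -(j.toAdd) := by
    intro j
    obtain ⟨x, hx⟩ := ZMod.intCast_surjective j.toAdd
    have hj : j = Multiplicative.ofAdd ((x : ZMod N)) := by rw [hx, ofAdd_toAdd]
    rw [hj, hω_int]
    have h1 : (↑(wc ^ x) : G) = w ^ x := by
      rw [SubgroupClass.coe_zpow]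
    rw [h1, map_zpow μ, hμw]
    show ((Multiplicative.ofAdd (-1 : ZMod N)) ^ x).toAdd = _
    rw [toAdd_zpow]
    show x • (-1 : ZMod N) = -(Multiplicative.ofAdd ((x : ZMod N))).toAdd
    rw [zsmul_eq_mul, mul_neg_one]
    rfl
  -- conclude
  refine ⟨p, c, ⟨w, ?_⟩, ?_⟩
  · rw [hval w, hμwAdd]
    intro hcontra
    have h1 : (-1 : ZMod N) = (((-1 : ℤ)) : ZMod N) := by push_cast; rfl
    rw [h1, hω_int] at hcontra
    have h2 : wc = 1 := by
      have := congrArg (fun z => z ^ (-1 : ℤ)) hcontra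
      simpa [zpow_neg] using this
    exact hw1 (congrArg Subtype.val h2)
  · intro x
    rw [hval x]
    have h1 : p ((c (↑(ω (Multiplicative.ofAdd ((μ x).toAdd))) : G)).comp
        (Subgroup.center G).subtype) = ω (Multiplicative.ofAdd ((μ x).toAdd))⁻¹ := by
      rw [hval, hμω, ofAdd_neg, ofAdd_toAdd]
    rw [h1, ← map_mul, mul_inv_cancel, map_one]

theorem reverse_dir [Finite G]
    (hRHS : ∀ (p : (Subgroup.center G →* ℂˣ) →* Subgroup.center G)
        (m : ℕ) (β : Fin m → (G →* (G →* ℂˣ))),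
        (∀ b : G →* (G →* ℂˣ), ∃! k : Fin m, ∀ x : G,
            p ((β k x).comp (Subgroup.center G).subtype)
              = p ((b x).comp (Subgroup.center G).subtype)) →
        ∀ c : G →* (G →* ℂˣ), ∃ k : Fin m, ∃ b : G →* (G →* ℂˣ),
          (∀ x : G, p ((b x).comp (Subgroup.center G).subtype)
              = p ((β k x).comp (Subgroup.center G).subtype)) ∧
          ∀ x : G, c x = b (x * (p ((β k x).comp (Subgroup.center G).subtype) : G))) :
    PurelyNonAbelian G := by
  classical
  intro A B nA nB hcompl hAcomm
  by_contra hAne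
  obtain ⟨p, c, ⟨x₀, hx₀⟩, hinv⟩ := construction A B nA nB hcompl hAcomm hAne
  set val : (G →* (G →* ℂˣ)) → (G → ↥(Subgroup.center G)) :=
    fun c' x => p ((c' x).comp (Subgroup.center G).subtype) with hvaldef
  set m := Nat.card ↥(Set.range val) with hm
  set eqv : ↥(Set.range val) ≃ Fin m := Finite.equivFin ↥(Set.range val) with heqv
  set β : Fin m → (G →* (G →* ℂˣ)) := fun k => ((eqv.symm k).2).choose with hβdef
  have hβ : ∀ k, val (β k) = ((eqv.symm k) : G → ↥(Subgroup.center G)) :=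
    fun k => ((eqv.symm k).2).choose_spec
  have hhyp : ∀ b : G →* (G →* ℂˣ), ∃! k : Fin m, ∀ x : G,
      p ((β k x).comp (Subgroup.center G).subtype)
        = p ((b x).comp (Subgroup.center G).subtype) := by
    intro b
    refine ⟨eqv ⟨val b, Set.mem_range_self b⟩, ?_, ?_⟩
    · intro x
      have h1 : val (β (eqv ⟨val b, Set.mem_range_self b⟩)) = val b := by
        rw [hβ, Equiv.symm_apply_apply]
      exact congrFun h1 x
    · intro k hk
      have h2 : val (β k) = val b := funext hk
      have h3 : eqv.symm k = ⟨val b, Set.mem_range_self b⟩ := Subtype.ext (by rw [← hβ, h2])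
      rw [← Equiv.apply_symm_apply eqv k, h3]
  have hconc := hRHS p m β hhyp
  set τ : Fin m → (G → ↥(Subgroup.center G)) := fun k => val (β k) with hτdef
  have hτinj : Function.Injective τ := by
    intro k k' h
    have h2 : eqv.symm k = eqv.symm k' := Subtype.ext (by rw [← hβ, ← hβ]; exact h)
    exact eqv.symm.injective h2
  set Hf : Fin m → (G → ↥(Subgroup.center G)) :=
    fun k x => τ k x * τ k ↑(τ k x) with hHfdef
  have hcover : ∀ k₀ : Fin m, ∃ k, τ k₀ = Hf k := by
    intro k₀
    obtain ⟨k, b, h1, h2⟩ := hconc (β k₀)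
    refine ⟨k, funext fun x => ?_⟩
    show p ((β k₀ x).comp (Subgroup.center G).subtype) = τ k x * τ k ↑(τ k x)
    rw [h2 x]
    have hbmul : ∀ u v : G, p ((b (u * v)).comp (Subgroup.center G).subtype)
        = p ((b u).comp (Subgroup.center G).subtype)
          * p ((b v).comp (Subgroup.center G).subtype) := by
      intro u v
      rw [map_mul b, MonoidHom.mul_comp, map_mul]
    rw [hbmul, h1 x, h1 (↑(p ((β k x).comp (Subgroup.center G).subtype)) : G)]
  -- two special indices
  have hk1 : ∃ k1, τ k1 = val 1 := ⟨eqv ⟨val 1, Set.mem_range_self 1⟩, by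
    show val (β _) = val 1
    rw [hβ, Equiv.symm_apply_apply]⟩
  have hkf : ∃ kf, τ kf = val c := ⟨eqv ⟨val c, Set.mem_range_self c⟩, by
    show val (β _) = val c
    rw [hβ, Equiv.symm_apply_apply]⟩
  obtain ⟨k1, hk1⟩ := hk1
  obtain ⟨kf, hkf⟩ := hkf
  have hval1 : val (1 : G →* (G →* ℂˣ)) = fun _ => 1 := by
    funext x
    show p (((1 : G →* (G →* ℂˣ)) x).comp (Subgroup.center G).subtype) = 1
    show p ((1 : G →* ℂˣ).comp (Subgroup.center G).subtype) = 1
    rw [MonoidHom.one_comp, map_one]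
  have hHkf : Hf kf = fun _ => 1 := by
    funext x
    show τ kf x * τ kf ↑(τ kf x) = 1
    rw [hkf]
    exact hinv x
  have hHk1 : Hf k1 = fun _ => 1 := by
    funext x
    show τ k1 x * τ k1 ↑(τ k1 x) = 1
    rw [hk1, hval1]
    show (1 : ↥(Subgroup.center G)) * 1 = 1
    rw [one_mul]
  have hne : k1 ≠ kf := by
    intro h
    have h1 : val (1 : G →* (G →* ℂˣ)) = val c := by rw [← hk1, h, hkf]
    have h2 := congrFun h1 x₀
    rw [hval1] at h2
    exact hx₀ h2.symm
  -- pigeonhole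
  have hsub : (Finset.univ.image τ) ⊆ (Finset.univ.erase kf).image Hf := by
    intro v hv
    obtain ⟨k₀, -, rfl⟩ := Finset.mem_image.mp hv
    obtain ⟨k, hk⟩ := hcover k₀
    by_cases hkkf : k = kf
    · refine Finset.mem_image.mpr ⟨k1, Finset.mem_erase.mpr ⟨hne, Finset.mem_univ _⟩, ?_⟩
      rw [hHk1, ← hHkf, ← hkkf, ← hk]
    · exact Finset.mem_image.mpr ⟨k, Finset.mem_erase.mpr ⟨hkkf, Finset.mem_univ _⟩, hk.symm⟩
  have hcard1 : (Finset.univ.image τ).card = m := by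
    rw [Finset.card_image_of_injective _ hτinj, Finset.card_univ, Fintype.card_fin]
  have hcard2 : ((Finset.univ.erase kf).image Hf).card ≤ m - 1 := by
    calc ((Finset.univ.erase kf).image Hf).card ≤ (Finset.univ.erase kf).card :=
      Finset.card_image_le
    _ = m - 1 := by rw [Finset.card_erase_of_mem (Finset.mem_univ _), Finset.card_univ,
        Fintype.card_fin]
  have hmle := (Finset.card_le_card hsub).trans hcard2
  rw [hcard1] at hmle
  have hmpos : 0 < m := kf.pos
  omega

end AuxiliaryLemmas

/-- `G` is purely non-abelian iff for every homomorphism `p : Ẑ(G) → Z(G)`, with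
`T_p : Hom(G, Ĝ) → Hom(G, Z(G))`, `T_p(β)(x) = p(ρ(β x))`, and any complete set
`β 0, …, β (m-1)` of coset representatives of `ker T_p` in `Hom(G, Ĝ)`, setting
`δ k (x) = x · p(ρ(β k x))`, every bicharacter of `G` is of the form `b ∘ δ k` for
some `k` and some `b ∈ (β k) · ker T_p`. -/
theorem purelyNonAbelian_iff_bicharacter_cover (G : Type*) [Group G] [Finite G] :
    PurelyNonAbelian G ↔
      ∀ (p : (Subgroup.center G →* ℂˣ) →* Subgroup.center G)
        (m : ℕ) (β : Fin m → (G →* (G →* ℂˣ))),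
        (∀ b : G →* (G →* ℂˣ), ∃! k : Fin m, ∀ x : G,
            p ((β k x).comp (Subgroup.center G).subtype)
              = p ((b x).comp (Subgroup.center G).subtype)) →
        ∀ c : G →* (G →* ℂˣ), ∃ k : Fin m, ∃ b : G →* (G →* ℂˣ),
          (∀ x : G, p ((b x).comp (Subgroup.center G).subtype)
              = p ((β k x).comp (Subgroup.center G).subtype)) ∧
          ∀ x : G, c x = b (x * (p ((β k x).comp (Subgroup.center G).subtype) : G)) := by
  constructor
  · exact fun hG => forward_dir hG
  · exact fun hRHS => reverse_dir hRHS
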